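/- Let b_j = ((10−j)!·5!)/(10!·(5−j)!·j!) for j = 0,…,5 be the coefficients of the numerator p_{5,5} of the diagonal Padé approximant r_{5,5} of the exponential. For a square complex matrix A, set A₂ = A², A₄ = A₂², u₅ = A·(b₅·A₄ + b₃·A₂ + b₁·I) and v₅ = b₄·A₄ + b₂·A₂ + b₀·I. Then u₅ + v₅ = p_{5,5}(A) and v₅ − u₅ = p_{5,5}(−A) = q_{5,5}(A); consequently, if v₅ − u₅ is invertible then (v₅ − u₅)⁻¹·(u₅ + v₅) = (q_{5,5}(A))⁻¹·p_{5,5}(A) = r_{5,5}(A), so the order-10 approximant r_{5,5}(A) is computed with exactly three matrix products and one inversion. -/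
import Mathlib


open Finset Matrix

/-- The coefficients of the numerator `p_{5,5}` of the diagonal Padé approximant
`r_{5,5}` of the exponential. -/
noncomputable def b55 (j : ℕ) : ℂ :=
  (Nat.factorial (10 - j) * Nat.factorial 5 : ℂ) /
    (Nat.factorial 10 * Nat.factorial (5 - j) * Nat.factorial j)

/-- The three-product-one-inverse scheme for the order-10 diagonal Padé
approximant `r_{5,5}`: with `A₂ = A²`, `A₄ = A₂²`,
`u₅ = A(b₅A₄ + b₃A₂ + b₁I)` and `v₅ = b₄A₄ + b₂A₂ + b₀I` one has
`u₅ + v₅ = p_{5,5}(A)`, `v₅ − u₅ = p_{5,5}(−A) = q_{5,5}(A)`, and hence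
`(v₅ − u₅)⁻¹ (u₅ + v₅) = r_{5,5}(A)` when the denominator is invertible. -/
theorem r55_three_products (N : ℕ) (A A₂ A₄ u₅ v₅ : Matrix (Fin N) (Fin N) ℂ)
    (hA₂ : A₂ = A * A) (hA₄ : A₄ = A₂ * A₂)
    (hu : u₅ = A * (b55 5 • A₄ + b55 3 • A₂ + b55 1 • (1 : Matrix (Fin N) (Fin N) ℂ)))
    (hv : v₅ = b55 4 • A₄ + b55 2 • A₂ + b55 0 • (1 : Matrix (Fin N) (Fin N) ℂ)) :
    u₅ + v₅ = ∑ j ∈ Finset.range 6, b55 j • A ^ j ∧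
    v₅ - u₅ = ∑ j ∈ Finset.range 6, b55 j • (-A) ^ j ∧
    (IsUnit (v₅ - u₅) →
      (v₅ - u₅)⁻¹ * (u₅ + v₅) =
        (∑ j ∈ Finset.range 6, b55 j • (-A) ^ j)⁻¹ * ∑ j ∈ Finset.range 6, b55 j • A ^ j) := by

  subst hA₂ hA₄ hu hv
  have h1 : ∀ B : Matrix (Fin N) (Fin N) ℂ,
      ∑ j ∈ Finset.range 6, b55 j • B ^ j =
      b55 0 • (1:Matrix (Fin N) (Fin N) ℂ) + b55 1 • B + b55 2 • (B*B) + b55 3 • (B*B*B)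
        + b55 4 • (B*B*B*B) + b55 5 • (B*B*B*B*B) := by
    intro B
    simp [Finset.sum_range_succ, pow_succ, pow_zero, Matrix.mul_assoc]
  constructor
  · rw [h1]
    simp only [Matrix.mul_add, Matrix.mul_smul, Matrix.mul_one, Matrix.mul_assoc]
    abel
  have h2 : b55 4 • (A*A*(A*A)) + b55 2 • (A*A) + b55 0 • (1:Matrix (Fin N) (Fin N) ℂ)
      - A * (b55 5 • (A*A*(A*A)) + b55 3 • (A*A) + b55 1 • (1:Matrix (Fin N) (Fin N) ℂ))
      = ∑ j ∈ Finset.range 6, b55 j • (-A) ^ j := by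
    rw [h1]
    simp only [Matrix.mul_add, Matrix.mul_smul, Matrix.mul_one, Matrix.mul_assoc,
      Matrix.neg_mul, Matrix.mul_neg, neg_neg, smul_neg]
    abel
  refine ⟨h2, fun hinv => ?_⟩
  rw [← h2]
  congr 1
  rw [h1]
  simp only [Matrix.mul_add, Matrix.mul_smul, Matrix.mul_one, Matrix.mul_assoc]
  abel
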